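/- (Kleinman iteration monotonicity, one step) Let A − BK_{k−1} be Hurwitz, P_k ≻ 0 solve P_k(A−BK_{k−1}) + (A−BK_{k−1})ᵀP_k + Q̃ + K_{k−1}ᵀRK_{k−1} = 0, and K_k = R⁻¹BᵀP_k. If A − BK_k is Hurwitz and P_{k+1} solves the analogous Lyapunov equation for K_k, then P_{k+1} ⪯ P_k. -/

import Mathlib

open Matrix Filter NormedSpace Topology

variable {n : ℕ}

lemma kleinman_scalar_decay {μ : ℂ} (hμ : μ.re < 0) (j : ℕ) :
    Tendsto (fun t : ℝ => Complex.exp ((t : ℂ) * μ) * (t : ℂ) ^ j) atTop (𝓝 0) := by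
  rw [tendsto_zero_iff_norm_tendsto_zero]
  have hb : (0 : ℝ) < -μ.re := by linarith
  have hne : ((-μ.re) ^ j : ℝ) ≠ 0 := pow_ne_zero _ (by linarith)
  have h1 : Tendsto (fun t : ℝ => ((-μ.re) * t) ^ j * Real.exp (-((-μ.re) * t)) * ((-μ.re) ^ j)⁻¹)
      atTop (𝓝 0) := by
    have h2 := (Real.tendsto_pow_mul_exp_neg_atTop_nhds_zero j).comp
      (tendsto_id.const_mul_atTop hb)
    simpa using h2.mul_const ((-μ.re) ^ j)⁻¹
  have heq : ∀ t : ℝ, ((-μ.re) * t) ^ j * Real.exp (-((-μ.re) * t)) * ((-μ.re) ^ j)⁻¹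
      = t ^ j * Real.exp (t * μ.re) := by
    intro t
    rw [mul_pow]
    have : -((-μ.re) * t) = t * μ.re := by ring
    rw [this]
    field_simp
  have h3 : Tendsto (fun t : ℝ => t ^ j * Real.exp (t * μ.re)) atTop (𝓝 0) := h1.congr heq
  apply h3.congr'
  filter_upwards [eventually_ge_atTop (0 : ℝ)] with t ht
  rw [norm_mul, Complex.norm_exp]
  have : ((t : ℂ) * μ).re = t * μ.re := by simp
  rw [this, norm_pow, Complex.norm_real, Real.norm_of_nonneg ht, mul_comm]
lemma kleinman_eigen_formula (Ac : Matrix (Fin n) (Fin n) ℂ) (μ : ℂ) (k : ℕ)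
    (v : Fin n → ℂ) (hNk : (Ac - μ • 1) ^ k *ᵥ v = 0) (t : ℝ) :
    exp ((t : ℂ) • Ac) *ᵥ v
      = ∑ j ∈ Finset.range k,
          (Complex.exp ((t : ℂ) * μ) * (t : ℂ) ^ j * ((Nat.factorial j : ℂ))⁻¹) •
            ((Ac - μ • 1) ^ j *ᵥ v) := by
  letI : SeminormedRing (Matrix (Fin n) (Fin n) ℂ) := Matrix.linftyOpSemiNormedRing
  letI : NormedRing (Matrix (Fin n) (Fin n) ℂ) := Matrix.linftyOpNormedRing
  letI : NormedAlgebra ℂ (Matrix (Fin n) (Fin n) ℂ) := Matrix.linftyOpNormedAlgebra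
  letI : NormedAlgebra ℚ (Matrix (Fin n) (Fin n) ℂ) := Matrix.linftyOpNormedAlgebra
  show exp ((t : ℂ) • Ac) *ᵥ v = _
  set N : Matrix (Fin n) (Fin n) ℂ := Ac - μ • 1 with hN
  have hsplit : (t : ℂ) • Ac = (t : ℂ) • (μ • (1 : Matrix (Fin n) (Fin n) ℂ)) + (t : ℂ) • N := by
    rw [← smul_add]
    congr 1
    simp [hN]
  have hcomm : Commute ((t : ℂ) • (μ • (1 : Matrix (Fin n) (Fin n) ℂ))) ((t : ℂ) • N) :=
    (((Commute.one_left N).smul_left μ).smul_left _).smul_right _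
  have hadd : exp ((t : ℂ) • (μ • (1 : Matrix (Fin n) (Fin n) ℂ)) + (t : ℂ) • N)
      = exp ((t : ℂ) • (μ • (1 : Matrix (Fin n) (Fin n) ℂ))) * exp ((t : ℂ) • N) :=
    exp_add_of_commute hcomm
  rw [hsplit, hadd]
  have h1 : exp ((t : ℂ) • (μ • (1 : Matrix (Fin n) (Fin n) ℂ)))
      = Complex.exp ((t : ℂ) * μ) • (1 : Matrix (Fin n) (Fin n) ℂ) := by
    rw [smul_smul, ← Algebra.algebraMap_eq_smul_one, Complex.exp_eq_exp_ℂ,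
      ← Algebra.algebraMap_eq_smul_one]
    exact (algebraMap_exp_comm _).symm
  rw [h1, smul_mul_assoc, one_mul, smul_mulVec]
  -- now compute exp (t • N) *ᵥ v
  have hL : ∀ (M : Matrix (Fin n) (Fin n) ℂ), M *ᵥ v = (Matrix.mulVecLin M) v := fun M => rfl
  have hsummable : Summable fun j : ℕ => ((Nat.factorial j : ℂ))⁻¹ • ((t : ℂ) • N) ^ j :=
    expSeries_summable' ((t : ℂ) • N)
  have hvanish : ∀ j : ℕ, k ≤ j → N ^ j *ᵥ v = 0 := by
    intro j hj
    have : N ^ j = N ^ (j - k) * N ^ k := by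
      rw [← pow_add, Nat.sub_add_cancel hj]
    rw [this, ← Matrix.mulVec_mulVec, hNk, Matrix.mulVec_zero]
  have hexp : exp ((t : ℂ) • N) *ᵥ v
      = ∑' j : ℕ, ((((Nat.factorial j : ℂ))⁻¹ • ((t : ℂ) • N) ^ j) *ᵥ v) := by
    let L : Matrix (Fin n) (Fin n) ℂ →ₗ[ℂ] (Fin n → ℂ) :=
      { toFun := fun M => M *ᵥ v
        map_add' := fun M M' => Matrix.add_mulVec M M' v
        map_smul' := fun c M => Matrix.smul_mulVec c M v }
    let Lc := LinearMap.toContinuousLinearMap L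
    have hsum2 := (hsummable.hasSum.mapL Lc)
    rw [show exp ((t : ℂ) • N) = ∑' j : ℕ, ((Nat.factorial j : ℂ))⁻¹ • ((t : ℂ) • N) ^ j from
      congrFun (exp_eq_tsum ℂ) _]
    exact hsum2.tsum_eq.symm
  have hterm : ∀ j : ℕ, (((Nat.factorial j : ℂ))⁻¹ • ((t : ℂ) • N) ^ j) *ᵥ v
      = ((t : ℂ) ^ j * ((Nat.factorial j : ℂ))⁻¹) • (N ^ j *ᵥ v) := by
    intro j
    rw [smul_pow, Matrix.smul_mulVec, Matrix.smul_mulVec, smul_smul, mul_comm]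
  have hfin : exp ((t : ℂ) • N) *ᵥ v
      = ∑ j ∈ Finset.range k, ((t : ℂ) ^ j * ((Nat.factorial j : ℂ))⁻¹) • (N ^ j *ᵥ v) := by
    rw [hexp]
    rw [tsum_eq_sum (s := Finset.range k) ?_]
    · exact Finset.sum_congr rfl fun j _ => hterm j
    · intro j hj
      rw [hterm j, hvanish j (by simpa using hj), smul_zero]
  rw [hfin, Finset.smul_sum]
  refine Finset.sum_congr rfl fun j _ => ?_
  rw [smul_smul, mul_assoc]
lemma kleinman_decay_complex (Ac : Matrix (Fin n) (Fin n) ℂ)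
    (h : ∀ μ ∈ spectrum ℂ Ac, μ.re < 0) (x : Fin n → ℂ) :
    Tendsto (fun t : ℝ => exp ((t : ℂ) • Ac) *ᵥ x) atTop (𝓝 0) := by
  set f : Module.End ℂ (Fin n → ℂ) := Matrix.toLinAlgEquiv' Ac with hf
  set S : Submodule ℂ (Fin n → ℂ) :=
    { carrier := {y | Tendsto (fun t : ℝ => exp ((t : ℂ) • Ac) *ᵥ y) atTop (𝓝 0)}
      add_mem' := by
        intro a b ha hb
        have := ha.add hb
        simpa [Matrix.mulVec_add] using this
      zero_mem' := by simp [Matrix.mulVec_zero, tendsto_const_nhds]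
      smul_mem' := by
        intro c a ha
        have := ha.const_smul c
        simpa [Matrix.mulVec_smul] using this } with hS
  have hxS : x ∈ S := by
    have htop := Module.End.iSup_maxGenEigenspace_eq_top f
    have hle : (⨆ μ, f.maxGenEigenspace μ) ≤ S := by
      apply iSup_le
      intro μ v hv
      rcases eq_or_ne v 0 with rfl | hv0
      · exact S.zero_mem
      obtain ⟨k, hk⟩ := (Module.End.mem_maxGenEigenspace f μ v).1 hv
      have hμ : μ.re < 0 := by
        apply h
        have hgE : v ∈ f.genEigenspace μ k := by
          rw [Module.End.mem_genEigenspace_nat]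
          exact hk
        have hev : f.HasEigenvalue μ :=
          Module.End.hasEigenvalue_of_hasGenEigenvalue (k := k)
            (Submodule.ne_bot_iff _ |>.2 ⟨v, hgE, hv0⟩)
        have := Module.End.hasEigenvalue_iff_mem_spectrum.1 hev
        rwa [AlgEquiv.spectrum_eq (Matrix.toLinAlgEquiv' (R := ℂ) (n := Fin n))] at this
      -- transfer hk to a matrix statement
      have hNk : (Ac - μ • 1) ^ k *ᵥ v = 0 := by
        have h1 : f - μ • 1 = Matrix.toLinAlgEquiv' (Ac - μ • (1 : Matrix (Fin n) (Fin n) ℂ)) := by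
          rw [map_sub, _root_.map_smul, _root_.map_one, hf]
        have h2 : (f - μ • 1) ^ k
            = Matrix.toLinAlgEquiv' ((Ac - μ • (1 : Matrix (Fin n) (Fin n) ℂ)) ^ k) := by
          rw [h1, map_pow]
        rw [h2] at hk
        rwa [Matrix.toLinAlgEquiv'_apply] at hk
      -- membership in S
      show Tendsto (fun t : ℝ => exp ((t : ℂ) • Ac) *ᵥ v) atTop (𝓝 0)
      have hcongr : ∀ t : ℝ, exp ((t : ℂ) • Ac) *ᵥ v
          = ∑ j ∈ Finset.range k,
              (Complex.exp ((t : ℂ) * μ) * (t : ℂ) ^ j * ((Nat.factorial j : ℂ))⁻¹) •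
                ((Ac - μ • 1) ^ j *ᵥ v) := kleinman_eigen_formula Ac μ k v hNk
      have hsum : Tendsto (fun t : ℝ => ∑ j ∈ Finset.range k,
          (Complex.exp ((t : ℂ) * μ) * (t : ℂ) ^ j * ((Nat.factorial j : ℂ))⁻¹) •
            ((Ac - μ • 1) ^ j *ᵥ v)) atTop (𝓝 0) := by
        have : Tendsto (fun t : ℝ => ∑ j ∈ Finset.range k,
            (Complex.exp ((t : ℂ) * μ) * (t : ℂ) ^ j * ((Nat.factorial j : ℂ))⁻¹) •
              ((Ac - μ • 1) ^ j *ᵥ v)) atTop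
            (𝓝 (∑ j ∈ Finset.range k, (0 : Fin n → ℂ))) := by
          apply tendsto_finset_sum
          intro j _
          have h0 := ((kleinman_scalar_decay hμ j).mul_const ((Nat.factorial j : ℂ))⁻¹).smul_const
            ((Ac - μ • 1) ^ j *ᵥ v)
          simpa using h0
        simpa using this
      exact hsum.congr fun t => (hcongr t).symm
    exact hle (htop ▸ Submodule.mem_top)
  exact hxS
lemma kleinman_decay_real (Ak : Matrix (Fin n) (Fin n) ℝ)
    (h : ∀ μ ∈ spectrum ℂ (Ak.map Complex.ofReal), μ.re < 0) (x : Fin n → ℝ) :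
    Tendsto (fun t : ℝ => exp (t • Ak) *ᵥ x) atTop (𝓝 0) := by
  have hmap : ∀ t : ℝ, (exp (t • Ak)).map Complex.ofReal
      = exp ((t : ℂ) • Ak.map Complex.ofReal) := by
    intro t
    letI : SeminormedRing (Matrix (Fin n) (Fin n) ℝ) := Matrix.linftyOpSemiNormedRing
    letI : NormedRing (Matrix (Fin n) (Fin n) ℝ) := Matrix.linftyOpNormedRing
    letI : NormedAlgebra ℝ (Matrix (Fin n) (Fin n) ℝ) := Matrix.linftyOpNormedAlgebra
    letI : SeminormedRing (Matrix (Fin n) (Fin n) ℂ) := Matrix.linftyOpSemiNormedRing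
    letI : NormedRing (Matrix (Fin n) (Fin n) ℂ) := Matrix.linftyOpNormedRing
    letI : NormedAlgebra ℝ (Matrix (Fin n) (Fin n) ℂ) := Matrix.linftyOpNormedAlgebra
    letI : NormedAlgebra ℚ (Matrix (Fin n) (Fin n) ℝ) := Matrix.linftyOpNormedAlgebra
    letI : NormedAlgebra ℚ (Matrix (Fin n) (Fin n) ℂ) := Matrix.linftyOpNormedAlgebra
    have hcont : Continuous (Complex.ofRealHom.mapMatrix
        : Matrix (Fin n) (Fin n) ℝ →+* Matrix (Fin n) (Fin n) ℂ) :=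
      continuous_id.matrix_map Complex.continuous_ofReal
    have h1 := map_exp (Complex.ofRealHom.mapMatrix
        : Matrix (Fin n) (Fin n) ℝ →+* Matrix (Fin n) (Fin n) ℂ) hcont (t • Ak)
    have h2 : (Complex.ofRealHom.mapMatrix (t • Ak) : Matrix (Fin n) (Fin n) ℂ)
        = (t : ℂ) • Ak.map Complex.ofReal := by
      ext i j
      simp [RingHom.mapMatrix_apply, Matrix.map_apply]
    have h3 : (exp : Matrix (Fin n) (Fin n) ℂ → _) = exp := rfl
    have h4 : (exp (t • Ak)).map Complex.ofReal
        = Complex.ofRealHom.mapMatrix (exp (t • Ak)) := rfl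
    rw [h4]
    erw [h1]
    rw [h2]
    rfl
  have hc := kleinman_decay_complex (Ak.map Complex.ofReal) h (fun i => (x i : ℂ))
  rw [tendsto_pi_nhds] at hc ⊢
  intro i
  have hcomp : ∀ t : ℝ, (exp (t • Ak) *ᵥ x) i
      = ((exp ((t : ℂ) • Ak.map Complex.ofReal) *ᵥ (fun i => (x i : ℂ))) i).re := by
    intro t
    rw [← hmap t]
    simp [Matrix.mulVec, dotProduct, Matrix.map_apply]
  have := (Complex.continuous_re.tendsto 0).comp (hc i)
  simp only [Complex.zero_re, Function.comp] at this
  have h0 : (0 : Fin n → ℝ) i = 0 := rfl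
  rw [h0]
  exact this.congr fun t => (hcomp t).symm
lemma kleinman_lyap_psd (Ak Δ M : Matrix (Fin n) (Fin n) ℝ) (hΔ : Δ.IsSymm) (hM : M.PosSemidef)
    (heq : Δ * Ak + Akᵀ * Δ = -M)
    (hHur : ∀ μ ∈ spectrum ℂ (Ak.map Complex.ofReal), μ.re < 0) : Δ.PosSemidef := by
  rw [Matrix.posSemidef_iff_dotProduct_mulVec]
  constructor
  · rw [Matrix.IsHermitian, Matrix.conjTranspose_eq_transpose_of_trivial]
    exact hΔ
  intro x
  rw [star_trivial]
  letI : SeminormedRing (Matrix (Fin n) (Fin n) ℝ) := Matrix.linftyOpSemiNormedRing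
  letI : NormedRing (Matrix (Fin n) (Fin n) ℝ) := Matrix.linftyOpNormedRing
  letI : NormedAlgebra ℝ (Matrix (Fin n) (Fin n) ℝ) := Matrix.linftyOpNormedAlgebra
  set E : ℝ → Matrix (Fin n) (Fin n) ℝ := fun t => exp (t • Ak) with hE
  set u : ℝ → (Fin n → ℝ) := fun t => E t *ᵥ x with hu
  set g : ℝ → ℝ := fun t => u t ⬝ᵥ (Δ *ᵥ u t) with hg
  -- derivative of E
  have hEd : ∀ t : ℝ, HasDerivAt E (Ak * E t) t := fun t => hasDerivAt_exp_smul_const' Ak t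
  -- derivative of u (coordinatewise via CLM)
  let L : Matrix (Fin n) (Fin n) ℝ →ₗ[ℝ] (Fin n → ℝ) :=
    { toFun := fun N => N *ᵥ x
      map_add' := fun N N' => Matrix.add_mulVec N N' x
      map_smul' := fun c N => Matrix.smul_mulVec c N x }
  let Lc := LinearMap.toContinuousLinearMap L
  have hud : ∀ t : ℝ, HasDerivAt u ((Ak * E t) *ᵥ x) t := by
    intro t
    have := Lc.hasFDerivAt.comp_hasDerivAt t (hEd t)
    exact this
  have hudi : ∀ (t : ℝ) (i : Fin n), HasDerivAt (fun s => u s i) (((Ak * E t) *ᵥ x) i) t := by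
    intro t i
    have := (ContinuousLinearMap.proj (R := ℝ) (φ := fun _ : Fin n => ℝ) i).hasFDerivAt.comp_hasDerivAt
      t (hud t)
    exact this
  -- derivative of g
  have hgd : ∀ t : ℝ, HasDerivAt g
      (((Ak *ᵥ u t) ⬝ᵥ (Δ *ᵥ u t)) + (u t ⬝ᵥ (Δ *ᵥ (Ak *ᵥ u t)))) t := by
    intro t
    have hsum : HasDerivAt (fun s => ∑ i, u s i * (∑ j, Δ i j * u s j))
        (∑ i, ((((Ak * E t) *ᵥ x) i) * (∑ j, Δ i j * u t j)
          + u t i * (∑ j, Δ i j * (((Ak * E t) *ᵥ x) j)))) t := by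
      apply HasDerivAt.fun_sum
      intro i _
      exact (hudi t i).mul (HasDerivAt.fun_sum fun j _ => (hudi t j).const_mul (Δ i j))
    have h1 : (fun s => ∑ i, u s i * (∑ j, Δ i j * u s j)) = g := by
      funext s
      simp [hg, dotProduct, Matrix.mulVec]
    have h2 : (∑ i, ((((Ak * E t) *ᵥ x) i) * (∑ j, Δ i j * u t j)
          + u t i * (∑ j, Δ i j * (((Ak * E t) *ᵥ x) j))))
        = ((Ak *ᵥ u t) ⬝ᵥ (Δ *ᵥ u t)) + (u t ⬝ᵥ (Δ *ᵥ (Ak *ᵥ u t))) := by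
      rw [← Matrix.mulVec_mulVec]
      simp [hu, hE, dotProduct, Matrix.mulVec, Finset.sum_add_distrib]
    rw [← h1, ← h2]
    exact hsum
  -- the derivative is nonpositive
  have hder_eq : ∀ t : ℝ, ((Ak *ᵥ u t) ⬝ᵥ (Δ *ᵥ u t)) + (u t ⬝ᵥ (Δ *ᵥ (Ak *ᵥ u t)))
      = -(u t ⬝ᵥ (M *ᵥ u t)) := by
    intro t
    have e1 : (Ak *ᵥ u t) ⬝ᵥ (Δ *ᵥ u t) = u t ⬝ᵥ ((Akᵀ * Δ) *ᵥ u t) := by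
      calc (Ak *ᵥ u t) ⬝ᵥ (Δ *ᵥ u t)
          = (u t ᵥ* Akᵀ) ⬝ᵥ (Δ *ᵥ u t) := by rw [Matrix.vecMul_transpose]
        _ = ((u t ᵥ* Akᵀ) ᵥ* Δ) ⬝ᵥ u t := Matrix.dotProduct_mulVec _ _ _
        _ = (u t ᵥ* (Akᵀ * Δ)) ⬝ᵥ u t := by rw [Matrix.vecMul_vecMul]
        _ = u t ⬝ᵥ ((Akᵀ * Δ) *ᵥ u t) := (Matrix.dotProduct_mulVec _ _ _).symm
    have e2 : u t ⬝ᵥ (Δ *ᵥ (Ak *ᵥ u t)) = u t ⬝ᵥ ((Δ * Ak) *ᵥ u t) := by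
      rw [Matrix.mulVec_mulVec]
    rw [e1, e2, ← dotProduct_add, ← Matrix.add_mulVec]
    have : Akᵀ * Δ + Δ * Ak = -M := by rw [add_comm]; exact heq
    rw [this, Matrix.neg_mulVec, dotProduct_neg]
  have hMnn : ∀ t : ℝ, 0 ≤ u t ⬝ᵥ (M *ᵥ u t) := by
    intro t
    have := hM.dotProduct_mulVec_nonneg (u t)
    rwa [star_trivial] at this
  have hmono : Antitone g :=
    antitone_of_deriv_nonpos (fun t => (hgd t).differentiableAt)
      (fun t => by rw [(hgd t).deriv, hder_eq t]; exact neg_nonpos.2 (hMnn t))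
  have hu0 : Tendsto u atTop (𝓝 0) := kleinman_decay_real Ak hHur x
  have hF : Continuous fun y : Fin n → ℝ => y ⬝ᵥ (Δ *ᵥ y) :=
    Continuous.dotProduct continuous_id (continuous_const.matrix_mulVec continuous_id)
  have htend : Tendsto g atTop (𝓝 0) := by
    have := (hF.tendsto 0).comp hu0
    simpa [Function.comp_def, hg] using this
  have hev : ∀ᶠ t in atTop, g t ≤ g 0 := by
    filter_upwards [eventually_ge_atTop (0 : ℝ)] with t ht
    exact hmono ht
  have h0 : (0 : ℝ) ≤ g 0 := le_of_tendsto htend hev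
  have hg0 : g 0 = x ⬝ᵥ Δ *ᵥ x := by
    simp [hg, hu, hE, exp_zero, Matrix.one_mulVec]
  rwa [hg0] at h0

/-- One-step monotonicity of the Kleinman policy iteration: `P_{k+1} ⪯ P_k`. -/
theorem stmt_9 {n m : ℕ}
    (A : Matrix (Fin n) (Fin n) ℝ) (B : Matrix (Fin n) (Fin m) ℝ)
    (Qt : Matrix (Fin n) (Fin n) ℝ) (R : Matrix (Fin m) (Fin m) ℝ)
    (hQt : Qt.PosSemidef) (hR : R.PosDef)
    (Kprev : Matrix (Fin m) (Fin n) ℝ)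
    (hKprev : ∀ μ ∈ spectrum ℂ ((A - B * Kprev).map Complex.ofReal), μ.re < 0)
    (Pk : Matrix (Fin n) (Fin n) ℝ) (hPk : Pk.PosDef)
    (hlyapk : Pk * (A - B * Kprev) + (A - B * Kprev)ᵀ * Pk + Qt + Kprevᵀ * R * Kprev = 0)
    (Kk : Matrix (Fin m) (Fin n) ℝ) (hKk : Kk = R⁻¹ * Bᵀ * Pk)
    (hKkHur : ∀ μ ∈ spectrum ℂ ((A - B * Kk).map Complex.ofReal), μ.re < 0)
    (Pk1 : Matrix (Fin n) (Fin n) ℝ) (hPk1 : Pk1.IsSymm)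
    (hlyapk1 : Pk1 * (A - B * Kk) + (A - B * Kk)ᵀ * Pk1 + Qt + Kkᵀ * R * Kk = 0) :
    (Pk - Pk1).PosSemidef := by
  have hRs : Rᵀ = R := by
    have h : Rᴴ = R := hR.1
    rwa [Matrix.conjTranspose_eq_transpose_of_trivial] at h
  have hPks : Pkᵀ = Pk := by
    have h : Pkᴴ = Pk := hPk.1
    rwa [Matrix.conjTranspose_eq_transpose_of_trivial] at h
  have hRK : R * Kk = Bᵀ * Pk := by
    rw [hKk, ← Matrix.mul_assoc, ← Matrix.mul_assoc,
      Matrix.mul_nonsing_inv R (isUnit_iff_ne_zero.2 hR.det_pos.ne'), Matrix.one_mul]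
  have hPB : Pk * B = Kkᵀ * R := by
    have h := congrArg Matrix.transpose hRK
    rw [Matrix.transpose_mul, Matrix.transpose_mul, hRs, hPks, Matrix.transpose_transpose] at h
    exact h.symm
  -- the two Lyapunov identities, rearranged
  have h3 : Pk1 * (A - B * Kk) + (A - B * Kk)ᵀ * Pk1 = -(Qt + Kkᵀ * R * Kk) := by
    have h := hlyapk1
    rw [add_assoc] at h
    exact eq_neg_of_add_eq_zero_left h
  have h4 : Pk * (A - B * Kprev) + (A - B * Kprev)ᵀ * Pk = -(Qt + Kprevᵀ * R * Kprev) := by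
    have h := hlyapk
    rw [add_assoc] at h
    exact eq_neg_of_add_eq_zero_left h
  have heq : (Pk - Pk1) * (A - B * Kk) + (A - B * Kk)ᵀ * (Pk - Pk1)
      = -((Kk - Kprev)ᵀ * R * (Kk - Kprev)) := by
    have expand : (Pk - Pk1) * (A - B * Kk) + (A - B * Kk)ᵀ * (Pk - Pk1)
        = (Pk * (A - B * Kprev) + (A - B * Kprev)ᵀ * Pk)
          - (Pk1 * (A - B * Kk) + (A - B * Kk)ᵀ * Pk1)
          - (Pk * B) * (Kk - Kprev) - (Kk - Kprev)ᵀ * (Bᵀ * Pk) := by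
      simp only [Matrix.transpose_sub, Matrix.transpose_mul, Matrix.mul_sub, Matrix.sub_mul,
        Matrix.mul_add, Matrix.add_mul, Matrix.mul_assoc]
      abel
    rw [expand, h3, h4, hPB, ← hRK]
    simp only [Matrix.transpose_sub, Matrix.transpose_mul, hRs, Matrix.mul_sub, Matrix.sub_mul,
      Matrix.mul_add, Matrix.add_mul, Matrix.mul_assoc]
    abel
  have hΔs : (Pk - Pk1).IsSymm := by
    rw [Matrix.IsSymm, Matrix.transpose_sub, hPks, hPk1]
  have hMpsd : ((Kk - Kprev)ᵀ * R * (Kk - Kprev)).PosSemidef := by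
    have := hR.posSemidef.conjTranspose_mul_mul_same (Kk - Kprev)
    rwa [Matrix.conjTranspose_eq_transpose_of_trivial] at this
  exact kleinman_lyap_psd (A - B * Kk) (Pk - Pk1) ((Kk - Kprev)ᵀ * R * (Kk - Kprev)) hΔs hMpsd heq hKkHur
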